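/- arXiv:2408.00583 — 4 statements merged into one kernel-verified Lean document; each statement's English description precedes it below -/
import Mathlib

section
/- Let G be a directed acyclic graph on [n], and let M = (m_ij) be a matrix supported on the edges of G with all diagonal entries equal to -1/(2ζ) for some ζ > 0. If Σ solves the Lyapunov equation MΣ + ΣMᵀ + 2I = 0, then each entry satisfies the trek rule: σ_ij = Σ_T 2 ζ^{ℓ+r+1} binom(ℓ+r, ℓ) m_T, where the sum runs over all (ℓ,r)-treks T from i to j in G, and m_T is the product of the off-diagonal edge parameters m_e over the edges e of T. -/
open Matrix

/-- A trek between `i` and `j` in a directed graph `E` on `Fin n`: an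
`(ℓ,r)`-trek consists of two directed paths from a common top node, of lengths
`ℓ = left.length - 1` and `r = right.length - 1`, ending at `i` and `j`. -/
structure GTrek (n : ℕ) (E : Fin n → Fin n → Prop) (i j : Fin n) where
  left : List (Fin n)
  right : List (Fin n)
  left_ne : left ≠ []
  right_ne : right ≠ []
  left_chain : left.Chain' E
  right_chain : right.Chain' E
  same_top : left.head? = right.head?
  left_last : left.getLast? = some i
  right_last : right.getLast? = some j

/-- The product `∏ m_{v,u}` over the directed edges `u → v` along a path given
as a list of nodes. -/
def pathWeight {n : ℕ} (M : Matrix (Fin n) (Fin n) ℝ) (l : List (Fin n)) : ℝ :=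
  ((l.zip l.tail).map fun p => M p.2 p.1).prod

/-- The weight `2 ζ^{ℓ+r+1} binom(ℓ+r, ℓ) m_T` of a trek `T`, where the trek
monomial `m_T` is the product of the edge parameters over the edges of `T`. -/
noncomputable def trekWeight {n : ℕ} {E : Fin n → Fin n → Prop} {i j : Fin n}
    (M : Matrix (Fin n) (Fin n) ℝ) (ζ : ℝ) (T : GTrek n E i j) : ℝ :=
  2 * ζ ^ (T.left.length - 1 + (T.right.length - 1) + 1) *
    ((T.left.length - 1 + (T.right.length - 1)).choose (T.left.length - 1) : ℝ) *
    pathWeight M T.left * pathWeight M T.right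

namespace TrekAux

open Finset

variable {n : ℕ}

lemma pathWeight_single (M : Matrix (Fin n) (Fin n) ℝ) (a : Fin n) :
    pathWeight M [a] = 1 := rfl

lemma pathWeight_cons_cons (M : Matrix (Fin n) (Fin n) ℝ) (a b : Fin n) (l : List (Fin n)) :
    pathWeight M (a :: b :: l) = M b a * pathWeight M (b :: l) := by
  simp [pathWeight]

/-- the finset of lists over `Fin n` of length `m` -/
def listsLen (n m : ℕ) : Finset (List (Fin n)) :=
  Finset.image List.ofFn (Finset.univ : Finset (Fin m → Fin n))

lemma mem_listsLen {m : ℕ} {l : List (Fin n)} : l ∈ listsLen n m ↔ l.length = m := by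
  constructor
  · rintro h
    simp only [listsLen, Finset.mem_image] at h
    obtain ⟨f, -, rfl⟩ := h
    simp
  · intro h
    subst h
    simp only [listsLen, Finset.mem_image]
    exact ⟨l.get, Finset.mem_univ _, List.ofFn_get l⟩

/-- lists of length `m+1` from `b` to `a` -/
def PL (m : ℕ) (b a : Fin n) : Finset (List (Fin n)) :=
  (listsLen n (m+1)).filter (fun l => l.head? = some b ∧ l.getLast? = some a)

lemma mem_PL {m : ℕ} {b a : Fin n} {l : List (Fin n)} :
    l ∈ PL m b a ↔ l.length = m + 1 ∧ l.head? = some b ∧ l.getLast? = some a := by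
  simp [PL, mem_listsLen]

lemma pow_apply_pathWeight (N : Matrix (Fin n) (Fin n) ℝ) (m : ℕ) (a b : Fin n) :
    (N ^ m) a b = ∑ l ∈ PL m b a, pathWeight N l := by
  induction m generalizing b with
  | zero =>
    have hPL : PL 0 b a = if a = b then {[b]} else (∅ : Finset (List (Fin n))) := by
      ext l
      simp only [mem_PL]
      constructor
      · rintro ⟨h1, h2, h3⟩
        obtain ⟨x, rfl⟩ := List.length_eq_one_iff.mp h1
        simp at h2 h3
        subst h2; subst h3; simp
      · intro hl
        split_ifs at hl with h
        · simp at hl; subst hl; subst h; simp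
        · simp at hl
    rw [hPL]
    by_cases h : a = b <;> simp [h, Matrix.one_apply, pathWeight_single]
  | succ m ih =>
    rw [pow_succ, Matrix.mul_apply]
    have : ∀ c, (N ^ m) a c * N c b = N c b * ∑ l ∈ PL m c a, pathWeight N l := by
      intro c; rw [ih, mul_comm]
    simp_rw [this, Finset.mul_sum]
    rw [← Finset.sum_sigma (Finset.univ : Finset (Fin n)) (fun c => PL m c a)
      (fun x => N x.1 b * pathWeight N x.2)]
    refine Finset.sum_bij (fun x _ => b :: x.2) ?_ ?_ ?_ ?_
    · rintro ⟨c, l⟩ hx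
      simp only [Finset.mem_sigma, Finset.mem_univ, true_and] at hx
      rw [mem_PL] at hx ⊢
      obtain ⟨h1, h2, h3⟩ := hx
      refine ⟨by simp [h1], by simp, ?_⟩
      cases l with
      | nil => simp at h1
      | cons x t => simpa using h3
    · rintro ⟨c₁, l₁⟩ h₁ ⟨c₂, l₂⟩ h₂ h
      simp only [Finset.mem_sigma, Finset.mem_univ, true_and, mem_PL] at h₁ h₂
      simp only [List.cons.injEq, true_and] at h
      subst h
      have : some c₁ = some c₂ := h₁.2.1.symm.trans h₂.2.1
      simp at this
      subst this; rfl
    · intro l hl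
      rw [mem_PL] at hl
      obtain ⟨h1, h2, h3⟩ := hl
      cases l with
      | nil => simp at h1
      | cons x t =>
        cases t with
        | nil => simp at h1
        | cons y t' =>
          simp at h2
          subst h2
          refine ⟨⟨y, y :: t'⟩, ?_, rfl⟩
          simp only [Finset.mem_sigma, Finset.mem_univ, true_and, mem_PL]
          exact ⟨by simpa using h1, by simp, by simpa using h3⟩
    · rintro ⟨c, l⟩ hx
      simp only [Finset.mem_sigma, Finset.mem_univ, true_and, mem_PL] at hx
      obtain ⟨h1, h2, h3⟩ := hx
      cases l with
      | nil => simp at h1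
      | cons x t =>
        simp at h2
        subst h2
        rw [pathWeight_cons_cons]

variable {E : Fin n → Fin n → Prop}

lemma chain_nodup (hacyc : ∀ v : Fin n, ¬ Relation.TransGen E v v)
    {l : List (Fin n)} (hl : l.Chain' E) : l.Nodup := by
  have h1 : l.Chain' (Relation.TransGen E) :=
    List.IsChain.imp (fun ⦃a b⦄ h => Relation.TransGen.single h) hl
  have h2 : l.Pairwise (Relation.TransGen E) := List.isChain_iff_pairwise.mp h1
  exact h2.imp (fun {a b} h => by rintro rfl; exact hacyc a h)

lemma pathWeight_eq_zero {N : Matrix (Fin n) (Fin n) ℝ}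
    (hN : ∀ a b : Fin n, N a b ≠ 0 → E b a)
    {l : List (Fin n)} (hl : ¬ l.Chain' E) : pathWeight N l = 0 := by
  induction l with
  | nil => exact absurd List.isChain_nil hl
  | cons a t ih =>
    cases t with
    | nil => exact absurd (List.isChain_singleton a) hl
    | cons b t' =>
      simp only [List.Chain', List.isChain_cons_cons] at hl
      push_neg at hl
      rw [pathWeight_cons_cons]
      by_cases hE : E a b
      · rw [ih (hl hE), mul_zero]
      · have : N b a = 0 := by
          by_contra h
          exact hE (hN b a h)
        rw [this, zero_mul]

lemma pathWeight_congr {M N : Matrix (Fin n) (Fin n) ℝ}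
    (hMN : ∀ a b : Fin n, E a b → M b a = N b a)
    {l : List (Fin n)} (hl : l.Chain' E) : pathWeight M l = pathWeight N l := by
  induction l with
  | nil => rfl
  | cons a t ih =>
    cases t with
    | nil => rfl
    | cons b t' =>
      simp only [List.Chain', List.isChain_cons_cons] at hl
      rw [pathWeight_cons_cons, pathWeight_cons_cons, hMN a b hl.1, ih hl.2]

lemma reindex_lemma (g : ℕ → ℕ → ℝ) (hg : ∀ l r, n ≤ l ∨ n ≤ r → g l r = 0) :
    ∑ k ∈ range (2*n), ∑ l ∈ range (k+1), g l (k - l)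
      = ∑ l ∈ range n, ∑ r ∈ range n, g l r := by
  have step1 : ∑ k ∈ range (2*n), ∑ l ∈ range (k+1), g l (k - l)
      = ∑ p ∈ ((range (2*n) ×ˢ range (2*n)).filter (fun p => p.1 + p.2 < 2*n)), g p.1 p.2 := by
    rw [← Finset.sum_sigma (range (2*n)) (fun k => range (k+1))
      (fun x => g x.2 (x.1 - x.2))]
    refine Finset.sum_bij (fun x _ => (x.2, x.1 - x.2)) ?_ ?_ ?_ ?_
    · rintro ⟨k, l⟩ hx
      simp only [Finset.mem_sigma, Finset.mem_range] at hx
      simp only [Finset.mem_filter, Finset.mem_product, Finset.mem_range]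
      omega
    · rintro ⟨k₁, l₁⟩ h₁ ⟨k₂, l₂⟩ h₂ h
      simp only [Finset.mem_sigma, Finset.mem_range] at h₁ h₂
      simp only [Prod.mk.injEq] at h
      obtain ⟨h3, h4⟩ := h
      subst h3
      have : k₁ = k₂ := by omega
      subst this; rfl
    · rintro ⟨l, r⟩ hp
      simp only [Finset.mem_filter, Finset.mem_product, Finset.mem_range] at hp
      refine ⟨⟨l + r, l⟩, ?_, ?_⟩
      · simp only [Finset.mem_sigma, Finset.mem_range]; omega
      · have : l + r - l = r := by omega
        simp [this]
    · rintro ⟨k, l⟩ hx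
      rfl
  rw [step1, ← Finset.sum_product']
  refine (Finset.sum_subset ?_ ?_).symm
  · rintro ⟨l, r⟩ hp
    simp only [Finset.mem_product, Finset.mem_range] at hp
    simp only [Finset.mem_filter, Finset.mem_product, Finset.mem_range]
    omega
  · rintro ⟨l, r⟩ hp hnp
    simp only [Finset.mem_filter, Finset.mem_product, Finset.mem_range] at hp
    simp only [Finset.mem_product, Finset.mem_range] at hnp
    apply hg
    omega

open Classical in
noncomputable def PLC (E : Fin n → Fin n → Prop) (m : ℕ) (b a : Fin n) :
    Finset (List (Fin n)) :=
  (PL m b a).filter (fun l => l.Chain' E)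

open Classical in
lemma mem_PLC {m : ℕ} {b a : Fin n} {l : List (Fin n)} :
    l ∈ PLC E m b a ↔
      (l.length = m + 1 ∧ l.head? = some b ∧ l.getLast? = some a) ∧ l.Chain' E := by
  simp [PLC, mem_PL, and_assoc]

/-- lists of length at most `n` -/
def allL (n : ℕ) : Finset (List (Fin n)) := (range (n+1)).biUnion (listsLen n)

lemma mem_allL {l : List (Fin n)} : l ∈ allL n ↔ l.length ≤ n := by
  simp only [allL, Finset.mem_biUnion, Finset.mem_range, mem_listsLen]
  constructor
  · rintro ⟨m, hm, rfl⟩; omega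
  · intro h; exact ⟨l.length, by omega, rfl⟩

open Classical in
noncomputable def Grand (E : Fin n → Fin n → Prop) (i j : Fin n) :
    Finset (List (Fin n) × List (Fin n)) :=
  ((allL n) ×ˢ (allL n)).filter (fun p => p.1 ≠ [] ∧ p.2 ≠ [] ∧ p.1.Chain' E ∧
    p.2.Chain' E ∧ p.1.head? = p.2.head? ∧ p.1.getLast? = some i ∧ p.2.getLast? = some j)

open Classical in
lemma mem_Grand {i j : Fin n} {p : List (Fin n) × List (Fin n)} :
    p ∈ Grand E i j ↔ (p.1.length ≤ n ∧ p.2.length ≤ n) ∧ p.1 ≠ [] ∧ p.2 ≠ [] ∧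
      p.1.Chain' E ∧ p.2.Chain' E ∧ p.1.head? = p.2.head? ∧
      p.1.getLast? = some i ∧ p.2.getLast? = some j := by
  simp [Grand, mem_allL, and_assoc]

lemma stepB (E : Fin n → Fin n → Prop) (M N : Matrix (Fin n) (Fin n) ℝ)
    (hNE : ∀ a b : Fin n, N a b ≠ 0 → E b a)
    (hMN : ∀ a b : Fin n, E a b → M b a = N b a)
    (ζ : ℝ) (i j : Fin n) :
    ∑ l ∈ range n, ∑ r ∈ range n,
        (2*ζ^(l+r+1) * (((l+r).choose l : ℝ))) * (N^l * Nᵀ^r) i j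
      = ∑ p ∈ Grand E i j,
          (2 * ζ^((p.1.length - 1) + (p.2.length - 1) + 1) *
          (((p.1.length - 1) + (p.2.length - 1)).choose (p.1.length - 1) : ℝ)) *
          (pathWeight M p.1 * pathWeight M p.2) := by
  classical
  have hrestrict : ∀ (m : ℕ) (b a : Fin n),
      ∑ p ∈ PL m b a, pathWeight N p = ∑ p ∈ PLC E m b a, pathWeight N p := by
    intro m b a
    exact (Finset.sum_filter_of_ne (fun x _ hne => by
      by_contra hc
      exact hne (pathWeight_eq_zero hNE hc))).symm
  have hentry : ∀ l r : ℕ, (N^l * Nᵀ^r) i j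
      = ∑ t, (∑ p ∈ PLC E l t i, pathWeight N p) * (∑ q ∈ PLC E r t j, pathWeight N q) := by
    intro l r
    rw [Matrix.mul_apply]
    refine Finset.sum_congr rfl fun t _ => ?_
    rw [← Matrix.transpose_pow, Matrix.transpose_apply, pow_apply_pathWeight,
      pow_apply_pathWeight, hrestrict, hrestrict]
  have nested : ∑ l ∈ range n, ∑ r ∈ range n,
        (2*ζ^(l+r+1) * (((l+r).choose l : ℝ))) * (N^l * Nᵀ^r) i j
      = ∑ l ∈ range n, ∑ r ∈ range n, ∑ t : Fin n, ∑ p ∈ PLC E l t i, ∑ q ∈ PLC E r t j,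
          (2*ζ^(l+r+1) * (((l+r).choose l : ℝ))) * (pathWeight N p * pathWeight N q) := by
    refine Finset.sum_congr rfl fun l _ => Finset.sum_congr rfl fun r _ => ?_
    rw [hentry l r, Finset.mul_sum]
    refine Finset.sum_congr rfl fun t _ => ?_
    rw [Finset.sum_mul_sum, Finset.mul_sum]
    refine Finset.sum_congr rfl fun p _ => ?_
    rw [Finset.mul_sum]
  rw [nested]
  have hQ : ∑ l ∈ range n, ∑ r ∈ range n, ∑ t : Fin n, ∑ p ∈ PLC E l t i, ∑ q ∈ PLC E r t j,
        (2*ζ^(l+r+1) * (((l+r).choose l : ℝ))) * (pathWeight N p * pathWeight N q)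
      = ∑ x ∈ (((range n ×ˢ range n) ×ˢ (Finset.univ : Finset (Fin n))).sigma
            fun y => (PLC E y.1.1 y.2 i) ×ˢ (PLC E y.1.2 y.2 j)),
          (2*ζ^(x.1.1.1+x.1.1.2+1) * (((x.1.1.1+x.1.1.2).choose x.1.1.1 : ℝ))) *
            (pathWeight N x.2.1 * pathWeight N x.2.2) := by
    rw [Finset.sum_sigma]
    rw [Finset.sum_product]
    rw [Finset.sum_product]
    simp_rw [Finset.sum_product]
  rw [hQ]
  refine Finset.sum_bij (fun x _ => x.2) ?_ ?_ ?_ ?_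
  · rintro ⟨⟨⟨l, r⟩, t⟩, p, q⟩ hx
    simp only [Finset.mem_sigma, Finset.mem_product, Finset.mem_univ, and_true,
      Finset.mem_range, mem_PLC] at hx
    obtain ⟨⟨hl, hr⟩, ⟨⟨hp1, hp2, hp3⟩, hp4⟩, ⟨hq1, hq2, hq3⟩, hq4⟩ := hx
    simp only [mem_Grand]
    refine ⟨⟨by omega, by omega⟩, ?_, ?_, hp4, hq4, ?_, hp3, hq3⟩
    · intro h; rw [h] at hp1; simp at hp1
    · intro h; rw [h] at hq1; simp at hq1
    · rw [hp2, hq2]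
  · rintro ⟨⟨⟨l₁, r₁⟩, t₁⟩, p₁, q₁⟩ h₁ ⟨⟨⟨l₂, r₂⟩, t₂⟩, p₂, q₂⟩ h₂ h
    simp only [Finset.mem_sigma, Finset.mem_product, Finset.mem_univ, and_true,
      Finset.mem_range, mem_PLC] at h₁ h₂
    simp only [Prod.mk.injEq] at h
    obtain ⟨rfl, rfl⟩ := h
    obtain ⟨-, ⟨⟨hp1, hp2, -⟩, -⟩, ⟨hq1, -, -⟩, -⟩ := h₁
    obtain ⟨-, ⟨⟨hp1', hp2', -⟩, -⟩, ⟨hq1', -, -⟩, -⟩ := h₂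
    have hl : l₁ = l₂ := by omega
    have hr : r₁ = r₂ := by omega
    have ht : t₁ = t₂ := by
      have := hp2.symm.trans hp2'
      simpa using this
    subst hl; subst hr; subst ht; rfl
  · intro pq hpq
    rw [mem_Grand] at hpq
    obtain ⟨⟨hlen1, hlen2⟩, hne1, hne2, hch1, hch2, hhead, hlast1, hlast2⟩ := hpq
    have hp1 : 0 < pq.1.length := List.length_pos_iff.mpr hne1
    have hq1 : 0 < pq.2.length := List.length_pos_iff.mpr hne2
    refine ⟨⟨⟨⟨pq.1.length - 1, pq.2.length - 1⟩, pq.1.head hne1⟩, pq⟩, ?_, rfl⟩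
    simp only [Finset.mem_sigma, Finset.mem_product, Finset.mem_univ, and_true,
      Finset.mem_range, mem_PLC]
    refine ⟨⟨by omega, by omega⟩, ⟨⟨by omega, ?_, hlast1⟩, hch1⟩, ⟨⟨by omega, ?_, hlast2⟩, hch2⟩⟩
    · exact List.head?_eq_head hne1
    · rw [← hhead]
      exact List.head?_eq_head hne1
  · rintro ⟨⟨⟨l, r⟩, t⟩, p, q⟩ hx
    simp only [Finset.mem_sigma, Finset.mem_product, Finset.mem_univ, and_true,
      Finset.mem_range, mem_PLC] at hx
    obtain ⟨-, ⟨⟨hp1, -, -⟩, hp4⟩, ⟨hq1, -, -⟩, hq4⟩ := hx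
    have hL : p.length - 1 = l := by omega
    have hR : q.length - 1 = r := by omega
    have hpw1 : pathWeight M p = pathWeight N p := pathWeight_congr hMN hp4
    have hpw2 : pathWeight M q = pathWeight N q := pathWeight_congr hMN hq4
    simp only [hL, hR, hpw1, hpw2]


lemma trek_eq {i j : Fin n} {T U : GTrek n E i j}
    (h1 : T.left = U.left) (h2 : T.right = U.right) : T = U := by
  cases T; cases U
  dsimp at h1 h2
  subst h1; subst h2
  rfl

lemma length_le (hacyc : ∀ v : Fin n, ¬ Relation.TransGen E v v)
    {l : List (Fin n)} (hl : l.Chain' E) : l.length ≤ n := by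
  have := (chain_nodup hacyc hl).length_le_card
  simpa using this

noncomputable def trekFintype (hacyc : ∀ v : Fin n, ¬ Relation.TransGen E v v)
    (i j : Fin n) : Fintype (GTrek n E i j) := by
  classical
  exact Fintype.ofInjective
    (fun T : GTrek n E i j =>
      ((⟨T.left, mem_allL.mpr (length_le hacyc T.left_chain)⟩,
        ⟨T.right, mem_allL.mpr (length_le hacyc T.right_chain)⟩) :
        {l // l ∈ allL n} × {l // l ∈ allL n}))
    (by
      intro T U h
      simp only [Prod.mk.injEq, Subtype.mk.injEq] at h
      exact trek_eq h.1 h.2)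

lemma stepA (hacyc : ∀ v : Fin n, ¬ Relation.TransGen E v v)
    (M : Matrix (Fin n) (Fin n) ℝ) (ζ : ℝ) (i j : Fin n) [Fintype (GTrek n E i j)] :
    ∑ p ∈ Grand E i j,
        (2 * ζ^((p.1.length - 1) + (p.2.length - 1) + 1) *
        (((p.1.length - 1) + (p.2.length - 1)).choose (p.1.length - 1) : ℝ)) *
        (pathWeight M p.1 * pathWeight M p.2)
      = ∑ T : GTrek n E i j, trekWeight M ζ T := by
  refine (Finset.sum_bij (fun (T : GTrek n E i j) (_ : T ∈ Finset.univ) => (T.left, T.right))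
    ?_ ?_ ?_ ?_).symm
  · intro T _
    rw [mem_Grand]
    exact ⟨⟨length_le hacyc T.left_chain, length_le hacyc T.right_chain⟩, T.left_ne,
      T.right_ne, T.left_chain, T.right_chain, T.same_top, T.left_last, T.right_last⟩
  · intro T _ U _ h
    simp only [Prod.mk.injEq] at h
    exact trek_eq h.1 h.2
  · intro p hp
    rw [mem_Grand] at hp
    obtain ⟨-, hne1, hne2, hch1, hch2, hhead, hlast1, hlast2⟩ := hp
    exact ⟨⟨p.1, p.2, hne1, hne2, hch1, hch2, hhead, hlast1, hlast2⟩, Finset.mem_univ _, rfl⟩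
  · intro T _
    simp only [trekWeight]
    ring

lemma solve_lyap {N S : Matrix (Fin n) (Fin n) ℝ} (hNn : N ^ n = 0) {ζ : ℝ}
    (hS : S = (2*ζ) • (1 : Matrix (Fin n) (Fin n) ℝ) + ζ • (N * S + S * Nᵀ)) :
    S = ∑ k ∈ range (2*n), (2*ζ^(k+1)) •
      ((((LinearMap.mulLeft ℝ N + LinearMap.mulRight ℝ Nᵀ)^k :
          Module.End ℝ (Matrix (Fin n) (Fin n) ℝ))) (1 : Matrix (Fin n) (Fin n) ℝ)) := by
  set A : Module.End ℝ (Matrix (Fin n) (Fin n) ℝ) := LinearMap.mulLeft ℝ N with hA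
  set B : Module.End ℝ (Matrix (Fin n) (Fin n) ℝ) := LinearMap.mulRight ℝ Nᵀ with hB
  have hAB : Commute A B := LinearMap.commute_mulLeft_right N Nᵀ
  have hApow : ∀ k, n ≤ k → A ^ k = 0 := by
    intro k hk
    rw [hA, LinearMap.pow_mulLeft]
    have : N ^ k = 0 := by
      obtain ⟨d, rfl⟩ := Nat.exists_eq_add_of_le hk
      rw [pow_add, hNn, zero_mul]
    rw [this]
    ext x : 1
    simp
  have hBpow : ∀ k, n ≤ k → B ^ k = 0 := by
    intro k hk
    rw [hB, LinearMap.pow_mulRight]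
    have : Nᵀ ^ k = 0 := by
      have : N ^ k = 0 := by
        obtain ⟨d, rfl⟩ := Nat.exists_eq_add_of_le hk
        rw [pow_add, hNn, zero_mul]
      rw [← transpose_pow, this, transpose_zero]
    rw [this]
    ext x : 1
    simp
  have hPhi : (A + B) ^ (2*n) = 0 := by
    rw [hAB.add_pow]
    refine Finset.sum_eq_zero fun m hm => ?_
    by_cases h : n ≤ m
    · rw [hApow m h, zero_mul, zero_mul]
    · push_neg at h
      have : n ≤ 2*n - m := by omega
      rw [hBpow _ this, mul_zero, zero_mul]
  set Φ : Module.End ℝ (Matrix (Fin n) (Fin n) ℝ) := A + B with hPhidef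
  set Sig : Matrix (Fin n) (Fin n) ℝ :=
    ∑ k ∈ range (2*n), (2*ζ^(k+1)) • ((Φ^k) 1) with hSig
  have hPhiapp : ∀ X : Matrix (Fin n) (Fin n) ℝ, Φ X = N * X + X * Nᵀ := fun X => rfl
  have hfix : Sig = (2*ζ) • (1 : Matrix (Fin n) (Fin n) ℝ) + ζ • (N * Sig + Sig * Nᵀ) := by
    rw [← hPhiapp]
    have h1 : Φ Sig = ∑ k ∈ range (2*n), (2*ζ^(k+1)) • ((Φ^(k+1)) 1) := by
      rw [hSig, map_sum]
      refine Finset.sum_congr rfl fun k _ => ?_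
      rw [LinearMap.map_smul, ← Module.End.mul_apply, ← pow_succ']
    rw [h1, Finset.smul_sum]
    have h2 : ∀ k, ζ • ((2*ζ^(k+1)) • ((Φ^(k+1)) (1 : Matrix (Fin n) (Fin n) ℝ)))
        = (2*ζ^(k+1+1)) • ((Φ^(k+1)) (1 : Matrix (Fin n) (Fin n) ℝ)) := by
      intro k
      rw [smul_smul]
      congr 1
      ring
    simp_rw [h2]
    rw [hSig, add_comm]
    have hf0 : (2*ζ) • (1 : Matrix (Fin n) (Fin n) ℝ)
        = (2*ζ^(0+1)) • ((Φ^0) (1 : Matrix (Fin n) (Fin n) ℝ)) := by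
      simp [pow_one]
    rw [hf0, ← Finset.sum_range_succ'
      (fun k => (2*ζ^(k+1)) • ((Φ^k) (1 : Matrix (Fin n) (Fin n) ℝ))) (2*n)]
    rw [Finset.sum_range_succ]
    have hz : (Φ ^ (2*n)) (1 : Matrix (Fin n) (Fin n) ℝ) = 0 := by rw [hPhi]; rfl
    rw [hz, smul_zero, add_zero]
  have hD : S - Sig = ζ • (Φ (S - Sig)) := by
    rw [map_sub, smul_sub]
    calc S - Sig = ((2*ζ) • (1 : Matrix (Fin n) (Fin n) ℝ) + ζ • (Φ S))
        - ((2*ζ) • (1 : Matrix (Fin n) (Fin n) ℝ) + ζ • (Φ Sig)) := by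
          rw [← hPhiapp] at hS hfix; rw [← hS, ← hfix]
      _ = ζ • (Φ S) - ζ • (Φ Sig) := by abel
  have hDk : ∀ k : ℕ, S - Sig = (ζ^k) • ((Φ^k) (S - Sig)) := by
    intro k
    induction k with
    | zero => simp
    | succ k ih =>
      calc S - Sig = ζ • (Φ (S - Sig)) := hD
        _ = ζ • (Φ ((ζ^k) • ((Φ^k) (S - Sig)))) := by rw [← ih]
        _ = (ζ^(k+1)) • ((Φ^(k+1)) (S - Sig)) := by
            rw [LinearMap.map_smul, smul_smul, ← Module.End.mul_apply, ← pow_succ',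
              ← pow_succ']
  have hzero : S - Sig = 0 := by
    rw [hDk (2*n), hPhi]
    simp
  rw [sub_eq_zero.mp hzero, hSig]

lemma phi_pow_one (N : Matrix (Fin n) (Fin n) ℝ) (k : ℕ) :
    (((LinearMap.mulLeft ℝ N + LinearMap.mulRight ℝ Nᵀ)^k :
        Module.End ℝ (Matrix (Fin n) (Fin n) ℝ))) (1 : Matrix (Fin n) (Fin n) ℝ)
      = ∑ l ∈ range (k+1), (k.choose l : ℝ) • (N^l * Nᵀ^(k-l)) := by
  rw [(LinearMap.commute_mulLeft_right N Nᵀ).add_pow]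
  rw [LinearMap.sum_apply]
  refine Finset.sum_congr rfl fun l hl => ?_
  rw [Module.End.mul_apply, Module.End.mul_apply]
  have h1 : ((k.choose l : ℕ) : Module.End ℝ (Matrix (Fin n) (Fin n) ℝ))
      (1 : Matrix (Fin n) (Fin n) ℝ) = (k.choose l : ℝ) • (1 : Matrix (Fin n) (Fin n) ℝ) := by
    simp [Module.End.natCast_apply, Nat.cast_smul_eq_nsmul]
  rw [h1, LinearMap.map_smul, LinearMap.map_smul]
  congr 1
  rw [LinearMap.pow_mulRight, LinearMap.pow_mulLeft]
  simp [LinearMap.mulRight_apply, LinearMap.mulLeft_apply]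

end TrekAux

open TrekAux Finset in
/-- Restricted trek rule: for a DAG `E`, a drift matrix `M` supported on the
edges of `E` with all diagonal entries `-1/(2ζ)`, any solution `Σ` of the
Lyapunov equation `MΣ + ΣMᵀ + 2I = 0` satisfies
`σ_ij = Σ_T 2 ζ^{ℓ+r+1} binom(ℓ+r,ℓ) m_T`, where the sum runs over all treks
`T` from `i` to `j`. -/
theorem restricted_trek_rule {n : ℕ} (E : Fin n → Fin n → Prop)
    (hacyc : ∀ v : Fin n, ¬ Relation.TransGen E v v)
    (ζ : ℝ) (hζ : 0 < ζ)
    (M S : Matrix (Fin n) (Fin n) ℝ)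
    (hsupp : ∀ a b : Fin n, a ≠ b → M a b ≠ 0 → E b a)
    (hdiag : ∀ a : Fin n, M a a = -1 / (2 * ζ))
    (hLyap : M * S + S * Mᵀ + (2 : ℝ) • (1 : Matrix (Fin n) (Fin n) ℝ) = 0)
    (i j : Fin n) :
    S i j = ∑' T : GTrek n E i j, trekWeight M ζ T := by
  classical
  haveI : Fintype (GTrek n E i j) := trekFintype hacyc i j
  rw [tsum_fintype]
  have hn : 0 < n := i.pos
  have hζ' : ζ ≠ 0 := ne_of_gt hζ
  set N : Matrix (Fin n) (Fin n) ℝ := M + ((2*ζ)⁻¹) • (1 : Matrix (Fin n) (Fin n) ℝ)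
    with hNdef
  have hNdiag : ∀ a : Fin n, N a a = 0 := by
    intro a
    rw [hNdef]
    simp only [Matrix.add_apply, Matrix.smul_apply, Matrix.one_apply_eq, smul_eq_mul,
      mul_one, hdiag a]
    field_simp
    ring
  have hNoff : ∀ a b : Fin n, a ≠ b → N a b = M a b := by
    intro a b hab
    rw [hNdef]
    simp [Matrix.one_apply_ne hab]
  have hNE : ∀ a b : Fin n, N a b ≠ 0 → E b a := by
    intro a b h
    by_cases hab : a = b
    · subst hab; exact absurd (hNdiag a) h
    · rw [hNoff a b hab] at h
      exact hsupp a b hab h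
  have hMN : ∀ a b : Fin n, E a b → M b a = N b a := by
    intro a b hE
    have hab : a ≠ b := by
      rintro rfl
      exact hacyc a (Relation.TransGen.single hE)
    exact (hNoff b a (Ne.symm hab)).symm
  have hNk : ∀ k, n ≤ k → N ^ k = 0 := by
    have hNn : N ^ n = 0 := by
      ext a b
      rw [pow_apply_pathWeight]
      rw [Matrix.zero_apply]
      refine Finset.sum_eq_zero fun l hl => ?_
      rw [mem_PL] at hl
      by_contra hne
      have hch : l.Chain' E := by
        by_contra hc
        exact hne (pathWeight_eq_zero hNE hc)
      have := length_le hacyc hch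
      omega
    intro k hk
    obtain ⟨d, rfl⟩ := Nat.exists_eq_add_of_le hk
    rw [pow_add, hNn, zero_mul]
  have hNn : N ^ n = 0 := hNk n le_rfl
  -- fixed point equation for S
  have hMdef : M = N - ((2*ζ)⁻¹) • (1 : Matrix (Fin n) (Fin n) ℝ) := by
    rw [hNdef]; exact (add_sub_cancel_right _ _).symm
  have hexp : M * S + S * Mᵀ + (2:ℝ) • (1 : Matrix (Fin n) (Fin n) ℝ)
      = N * S + S * Nᵀ + (2:ℝ) • (1 : Matrix (Fin n) (Fin n) ℝ) - (2*(2*ζ)⁻¹) • S := by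
    rw [hMdef]
    rw [Matrix.transpose_sub, Matrix.transpose_smul, Matrix.transpose_one]
    rw [Matrix.sub_mul, Matrix.mul_sub]
    rw [Matrix.smul_mul, Matrix.mul_smul, one_mul, mul_one]
    have h2s : ((2*(2*ζ)⁻¹ : ℝ)) • S = (2*ζ)⁻¹ • S + (2*ζ)⁻¹ • S := by
      rw [two_mul, add_smul]
    rw [h2s]
    abel
  have h0 : N * S + S * Nᵀ + (2:ℝ) • (1 : Matrix (Fin n) (Fin n) ℝ) - (2*(2*ζ)⁻¹) • S = 0 := by
    rw [← hexp]; exact hLyap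
  have h1 : (2*(2*ζ)⁻¹) • S = N * S + S * Nᵀ + (2:ℝ) • (1 : Matrix (Fin n) (Fin n) ℝ) :=
    (sub_eq_zero.mp h0).symm
  have h2 : S = ζ • ((2*(2*ζ)⁻¹) • S) := by
    rw [smul_smul]
    have : ζ * (2*(2*ζ)⁻¹) = 1 := by
      field_simp
    rw [this, one_smul]
  have hS : S = (2*ζ) • (1 : Matrix (Fin n) (Fin n) ℝ) + ζ • (N * S + S * Nᵀ) := by
    calc S = ζ • ((2*(2*ζ)⁻¹) • S) := h2
      _ = ζ • (N * S + S * Nᵀ + (2:ℝ) • (1 : Matrix (Fin n) (Fin n) ℝ)) := by rw [h1]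
      _ = (2*ζ) • (1 : Matrix (Fin n) (Fin n) ℝ) + ζ • (N * S + S * Nᵀ) := by
          rw [smul_add, smul_smul, mul_comm ζ 2, add_comm]
  have hSrepr := solve_lyap hNn hS
  set g : ℕ → ℕ → ℝ := fun l r =>
    (2*ζ^(l+r+1) * (((l+r).choose l : ℝ))) * (N^l * Nᵀ^r) i j with hg
  have hgzero : ∀ l r, n ≤ l ∨ n ≤ r → g l r = 0 := by
    intro l r h
    rw [hg]
    rcases h with h | h
    · simp only [hNk l h, Matrix.zero_mul, Matrix.zero_apply, mul_zero]
    · have : Nᵀ ^ r = 0 := by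
        rw [← Matrix.transpose_pow, hNk r h, Matrix.transpose_zero]
      simp only [this, Matrix.mul_zero, Matrix.zero_apply, mul_zero]
  calc S i j
      = ∑ k ∈ range (2*n), (2*ζ^(k+1)) *
          ((((LinearMap.mulLeft ℝ N + LinearMap.mulRight ℝ Nᵀ)^k :
            Module.End ℝ (Matrix (Fin n) (Fin n) ℝ))) (1 : Matrix (Fin n) (Fin n) ℝ)) i j := by
        rw [hSrepr, Matrix.sum_apply]
        refine Finset.sum_congr rfl fun k _ => ?_
        rw [Matrix.smul_apply, smul_eq_mul]
    _ = ∑ k ∈ range (2*n), ∑ l ∈ range (k+1),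
          (2*ζ^(k+1)) * ((k.choose l : ℝ) * (N^l * Nᵀ^(k-l)) i j) := by
        refine Finset.sum_congr rfl fun k _ => ?_
        rw [phi_pow_one, Matrix.sum_apply, Finset.mul_sum]
        refine Finset.sum_congr rfl fun l _ => ?_
        rw [Matrix.smul_apply, smul_eq_mul]
    _ = ∑ k ∈ range (2*n), ∑ l ∈ range (k+1), g l (k - l) := by
        refine Finset.sum_congr rfl fun k hk => Finset.sum_congr rfl fun l hl => ?_
        rw [Finset.mem_range] at hl
        have h : l + (k - l) = k := by omega
        rw [hg]
        simp only [h]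
        ring
    _ = ∑ l ∈ range n, ∑ r ∈ range n, g l r := reindex_lemma g hgzero
    _ = ∑ p ∈ Grand E i j,
          (2 * ζ^((p.1.length - 1) + (p.2.length - 1) + 1) *
          (((p.1.length - 1) + (p.2.length - 1)).choose (p.1.length - 1) : ℝ)) *
          (pathWeight M p.1 * pathWeight M p.2) := stepB E M N hNE hMN ζ i j
    _ = ∑ T : GTrek n E i j, trekWeight M ζ T := stepA hacyc M ζ i j
end

section
/- Let G be a DAG with M supported on its edges and diagonal entries all equal to -1/(2ζ), ζ > 0, and let Σ solve MΣ + ΣMᵀ + 2I = 0. If i is a source node of G (no parents other than itself), then σ_ii = 2ζ. If i and k are two distinct source nodes, then σ_ik = 0. -/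
open Matrix

/-- Source nodes in the Lyapunov model of a DAG: if `M` is supported on the
edges of a DAG `E` with diagonal entries `-1/(2ζ)` and `Σ` solves the Lyapunov
equation `MΣ + ΣMᵀ + 2I = 0`, then `σ_ii = 2ζ` for any source node `i`
(a node with no parents other than itself), and `σ_ik = 0` for distinct
source nodes `i` and `k`. -/
theorem source_node_entries {n : ℕ} (E : Fin n → Fin n → Prop)
    (hacyc : ∀ v : Fin n, ¬ Relation.TransGen E v v)
    (ζ : ℝ) (hζ : 0 < ζ)
    (M S : Matrix (Fin n) (Fin n) ℝ)
    (hsupp : ∀ a b : Fin n, a ≠ b → M a b ≠ 0 → E b a)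
    (hdiag : ∀ a : Fin n, M a a = -1 / (2 * ζ))
    (hLyap : M * S + S * Mᵀ + (2 : ℝ) • (1 : Matrix (Fin n) (Fin n) ℝ) = 0)
    (i : Fin n) (hi : ∀ a : Fin n, a ≠ i → ¬ E a i) :
    S i i = 2 * ζ ∧
      ∀ k : Fin n, k ≠ i → (∀ a : Fin n, a ≠ k → ¬ E a k) → S i k = 0 := by
  have hζ' : ζ ≠ 0 := ne_of_gt hζ
  -- row of M at a source node is zero off-diagonal
  have hrow : ∀ (s : Fin n), (∀ a : Fin n, a ≠ s → ¬ E a s) →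
      ∀ b, b ≠ s → M s b = 0 := by
    intro s hs b hb
    by_contra h
    exact hs b hb (hsupp s b (Ne.symm hb) h)
  have hMS : ∀ (s : Fin n), (∀ a : Fin n, a ≠ s → ¬ E a s) →
      ∀ k, (M * S) s k = (-1 / (2 * ζ)) * S s k := by
    intro s hs k
    rw [Matrix.mul_apply, Finset.sum_eq_single s]
    · rw [hdiag]
    · intro b _ hb
      rw [hrow s hs b hb, zero_mul]
    · simp
  have hSM : ∀ (s : Fin n), (∀ a : Fin n, a ≠ s → ¬ E a s) →
      ∀ k, (S * Mᵀ) k s = (-1 / (2 * ζ)) * S k s := by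
    intro s hs k
    rw [Matrix.mul_apply, Finset.sum_eq_single s]
    · rw [Matrix.transpose_apply, hdiag, mul_comm]
    · intro b _ hb
      rw [Matrix.transpose_apply, hrow s hs b hb, mul_zero]
    · simp
  have heq : ∀ j k, (M * S) j k + (S * Mᵀ) j k
      + (2 : ℝ) * (if j = k then (1:ℝ) else 0) = 0 := by
    intro j k
    have := congrFun (congrFun hLyap j) k
    simpa [Matrix.one_apply] using this
  constructor
  · have h := heq i i
    rw [hMS i hi i, hSM i hi i, if_pos rfl] at h
    field_simp at h
    have h2 : S i i * (2 * ζ) = (2 * ζ) * (2 * ζ) := by linear_combination (-ζ) * h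
    exact mul_right_cancel₀ (by positivity) h2
  · intro k hk hks
    have h := heq i k
    rw [hMS i hi k, hSM k hks i, if_neg (Ne.symm hk)] at h
    have h' : (-1 / (2 * ζ)) * S i k * 2 = 0 := by linarith
    have h2 : (-1 / (2 * ζ)) ≠ 0 := by
      simp [hζ']
    rcases mul_eq_zero.mp h' with h3 | h3
    · rcases mul_eq_zero.mp h3 with h4 | h4
      · exact absurd h4 h2
      · exact h4
    · norm_num at h3
end

section
/- Let G be a directed graph and G′ = (V′, E′) a subgraph of G. Fix nodes i, j ∈ V′ and a set K′ ⊆ V′ ∖ {i,j}. If there exists Σ′ in the Lyapunov model M_{G′} with det(Σ′_{iK′, jK′}) ≠ 0, then for every K ⊆ V(G) ∖ {i,j} with K ∩ V′ = K′, there exists Σ in the Lyapunov model M_G with det(Σ_{iK, jK}) ≠ 0. In particular, a conditional dependence i ⫫̸ j | K′ exhibited on a subgraph lifts to the full graph with any conditioning set restricting to K′. -/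
open Matrix

/-- A real square matrix is stable if all its (complex) eigenvalues have
strictly negative real part. -/
def IsStable {ι : Type*} [Fintype ι] [DecidableEq ι] (M : Matrix ι ι ℝ) : Prop :=
  ∀ μ ∈ spectrum ℂ (M.map (fun x => (x : ℂ))), μ.re < 0

/-- The minor of `S` with rows indexed by the finset `R` and columns by the
finset `C` (of equal cardinality), rows and columns taken in increasing
order. -/
noncomputable def finMinor {ι : Type*} [Fintype ι] [LinearOrder ι]
    (S : Matrix ι ι ℝ) (R C : Finset ι) (h : R.card = C.card) : ℝ :=
  (S.submatrix (fun a : Fin R.card => ((R.orderIsoOfFin rfl a : R) : ι))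
    (fun b : Fin R.card => ((C.orderIsoOfFin h.symm b : C) : ι))).det

lemma range_coe_orderIsoOfFin {α : Type*} [LinearOrder α] (s : Finset α) {k : ℕ}
    (h : s.card = k) :
    Set.range (fun a : Fin k => ((s.orderIsoOfFin h a : s) : α)) = ↑s := by
  ext x
  simp only [Set.mem_range, Finset.mem_coe]
  constructor
  · rintro ⟨a, rfl⟩; exact (s.orderIsoOfFin h a).2
  · intro hx; exact ⟨(s.orderIsoOfFin h).symm ⟨x, hx⟩, by simp⟩

lemma exists_comp_perm {α : Type*} {m : ℕ} {f g : Fin m → α}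
    (hf : Function.Injective f) (hg : Function.Injective g)
    (h : Set.range f = Set.range g) : ∃ π : Equiv.Perm (Fin m), f = g ∘ π := by
  refine ⟨(Equiv.ofInjective f hf).trans ((Equiv.setCongr h).trans
    (Equiv.ofInjective g hg).symm), ?_⟩
  funext x
  show f x = g ((Equiv.ofInjective g hg).symm ((Equiv.setCongr h) (Equiv.ofInjective f hf x)))
  rw [Equiv.apply_ofInjective_symm hg]
  rfl

lemma posDef_submatrix_equiv' {m l : Type*} [Fintype m] [Fintype l] {M : Matrix l l ℝ}
    (hM : M.PosDef) (e : m ≃ l) : (M.submatrix e e).PosDef := by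
  refine Matrix.PosDef.of_dotProduct_mulVec_pos (hM.1.submatrix e) (fun x hx => ?_)
  rw [submatrix_mulVec_equiv]
  have hx' : x ∘ e.symm ≠ 0 := by
    intro h0
    apply hx
    funext a
    have := congrFun h0 (e a)
    simpa using this
  have := hM.dotProduct_mulVec_pos hx'
  calc (0:ℝ) < star (x ∘ e.symm) ⬝ᵥ (M *ᵥ (x ∘ e.symm)) := this
    _ = star x ⬝ᵥ ((M *ᵥ (x ∘ e.symm)) ∘ e) := by
        rw [show star x = x from rfl, show star (x ∘ e.symm) = x ∘ e.symm from rfl]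
        rw [← comp_equiv_symm_dotProduct _ _ e]

lemma posDef_fromBlocks_diag {m l : Type*} [Fintype m] [Fintype l]
    {A : Matrix m m ℝ} {D : Matrix l l ℝ} (hA : A.PosDef) (hD : D.PosDef) :
    (fromBlocks A 0 0 D).PosDef := by
  refine Matrix.PosDef.of_dotProduct_mulVec_pos (IsHermitian.fromBlocks hA.1 (by simp) hD.1) (fun x hx => ?_)
  have hxe : x = Sum.elim (x ∘ Sum.inl) (x ∘ Sum.inr) := (Sum.elim_comp_inl_inr x).symm
  rw [hxe, fromBlocks_mulVec]
  simp only [Matrix.zero_mulVec, add_zero, zero_add, Sum.elim_comp_inl, Sum.elim_comp_inr]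
  rw [show star (Sum.elim (x ∘ Sum.inl) (x ∘ Sum.inr)) =
    Sum.elim (x ∘ Sum.inl) (x ∘ Sum.inr) from rfl, sumElim_dotProduct_sumElim]
  rcases (by
    by_contra hc
    push_neg at hc
    apply hx
    funext a
    cases a with
    | inl a => exact congrFun hc.1 a
    | inr a => exact congrFun hc.2 a : x ∘ Sum.inl ≠ 0 ∨ x ∘ Sum.inr ≠ 0) with h1 | h1
  · have := hA.dotProduct_mulVec_pos h1
    have h2 := hD.posSemidef.dotProduct_mulVec_nonneg (x ∘ Sum.inr)
    simp only [show ∀ y : m → ℝ, star y = y from fun _ => rfl] at this ⊢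
    nlinarith [this, (by simpa using h2 : (0:ℝ) ≤ (x ∘ Sum.inr) ⬝ᵥ (D *ᵥ (x ∘ Sum.inr)))]
  · have := hD.dotProduct_mulVec_pos h1
    have h2 := hA.posSemidef.dotProduct_mulVec_nonneg (x ∘ Sum.inl)
    simp only [show ∀ y : l → ℝ, star y = y from fun _ => rfl] at this
    nlinarith [this, (by simpa using h2 : (0:ℝ) ≤ (x ∘ Sum.inl) ⬝ᵥ (A *ᵥ (x ∘ Sum.inl)))]

lemma spectrum_fromBlocks_subset {m l : Type*} [Fintype m] [DecidableEq m]
    [Fintype l] [DecidableEq l] (A : Matrix m m ℂ) (D : Matrix l l ℂ) :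
    spectrum ℂ (fromBlocks A 0 0 D) ⊆ spectrum ℂ A ∪ spectrum ℂ D := by
  intro μ hμ
  by_contra hc
  simp only [Set.mem_union, not_or] at hc
  rw [spectrum.mem_iff] at hμ
  apply hμ
  have h1 : IsUnit (algebraMap ℂ (Matrix m m ℂ) μ - A) := by
    by_contra h; exact hc.1 (spectrum.mem_iff.mpr h)
  have h2 : IsUnit (algebraMap ℂ (Matrix l l ℂ) μ - D) := by
    by_contra h; exact hc.2 (spectrum.mem_iff.mpr h)
  have key : algebraMap ℂ (Matrix (m ⊕ l) (m ⊕ l) ℂ) μ - fromBlocks A 0 0 D =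
      fromBlocks (algebraMap ℂ (Matrix m m ℂ) μ - A) 0 0
        (algebraMap ℂ (Matrix l l ℂ) μ - D) := by
    rw [Algebra.algebraMap_eq_smul_one, Algebra.algebraMap_eq_smul_one,
      Algebra.algebraMap_eq_smul_one, ← fromBlocks_one, fromBlocks_smul,
      sub_eq_add_neg, sub_eq_add_neg, sub_eq_add_neg, fromBlocks_neg, fromBlocks_add]
    simp
  rw [key, Matrix.isUnit_iff_isUnit_det, det_fromBlocks_zero₂₁]
  exact ((Matrix.isUnit_iff_isUnit_det _).mp h1).mul ((Matrix.isUnit_iff_isUnit_det _).mp h2)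

lemma spectrum_neg_one_subset {l : Type*} [Fintype l] [DecidableEq l] :
    spectrum ℂ (-1 : Matrix l l ℂ) ⊆ {-1} := by
  intro μ hμ
  rw [spectrum.mem_iff] at hμ
  by_contra hne
  apply hμ
  have : algebraMap ℂ (Matrix l l ℂ) μ - (-1) = algebraMap ℂ (Matrix l l ℂ) (μ + 1) := by
    rw [map_add, _root_.map_one, sub_neg_eq_add]
  rw [this]
  exact (isUnit_iff_ne_zero.mpr (by
    intro h; exact hne (by rw [Set.mem_singleton_iff]; linear_combination h))).map
    (algebraMap ℂ (Matrix l l ℂ))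

lemma inj_coe_orderIsoOfFin {α : Type*} [LinearOrder α] (s : Finset α) {k : ℕ}
    (h : s.card = k) :
    Function.Injective (fun a : Fin k => ((s.orderIsoOfFin h a : s) : α)) :=
  fun a b hab => (s.orderIsoOfFin h).injective (Subtype.ext hab)

/-- Lifting a conditional dependence from a subgraph: if the Lyapunov model of
a subgraph `G'` (on vertex set `V'`, edge set `E'` contained in `G`) contains a
matrix `Σ'` with `det Σ'_{iK',jK'} ≠ 0`, then for every `K` with
`K ∩ V' = K'`, the Lyapunov model of `G` contains a matrix `Σ` with
`det Σ_{iK,jK} ≠ 0`. -/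
theorem subgraph_dependence_lifts {n : ℕ} (G : Fin n → Fin n → Prop)
    (V' : Finset (Fin n)) (E' : Fin n → Fin n → Prop)
    (hsub : ∀ a b : Fin n, E' a b → G a b ∧ a ∈ V' ∧ b ∈ V')
    (i j : ↥V') (hij : i ≠ j)
    (K' : Finset ↥V') (hiK' : i ∉ K') (hjK' : j ∉ K')
    (hdep : ∃ S' : Matrix ↥V' ↥V' ℝ, S'.PosDef ∧
      (∃ M' : Matrix ↥V' ↥V' ℝ, IsStable M' ∧
        (∀ a b : ↥V', a ≠ b → M' a b ≠ 0 → E' (b : Fin n) (a : Fin n)) ∧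
        M' * S' + S' * M'ᵀ + (2 : ℝ) • (1 : Matrix ↥V' ↥V' ℝ) = 0) ∧
      finMinor S' (insert i K') (insert j K')
        (by rw [Finset.card_insert_of_notMem hiK', Finset.card_insert_of_notMem hjK']) ≠ 0)
    (K : Finset (Fin n)) (hiK : (i : Fin n) ∉ K) (hjK : (j : Fin n) ∉ K)
    (hKV' : ∀ v : ↥V', v ∈ K' ↔ (v : Fin n) ∈ K) :
    ∃ S : Matrix (Fin n) (Fin n) ℝ, S.PosDef ∧
      (∃ M : Matrix (Fin n) (Fin n) ℝ, IsStable M ∧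
        (∀ a b : Fin n, a ≠ b → M a b ≠ 0 → G b a) ∧
        M * S + S * Mᵀ + (2 : ℝ) • (1 : Matrix (Fin n) (Fin n) ℝ) = 0) ∧
      finMinor S (insert (i : Fin n) K) (insert (j : Fin n) K)
        (by rw [Finset.card_insert_of_notMem hiK, Finset.card_insert_of_notMem hjK]) ≠ 0 := by
  classical
  obtain ⟨S', hS'pd, ⟨M', hM'stab, hM'supp, hM'lyap⟩, hminor⟩ := hdep
  set e : {x : Fin n // x ∈ V'} ⊕ {x : Fin n // ¬ x ∈ V'} ≃ Fin n :=
    Equiv.sumCompl (· ∈ V') with he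
  set Sb : Matrix _ _ ℝ :=
    fromBlocks S' 0 0 (1 : Matrix {x : Fin n // ¬ x ∈ V'} {x : Fin n // ¬ x ∈ V'} ℝ) with hSb
  set Mb : Matrix _ _ ℝ :=
    fromBlocks M' 0 0 (-1 : Matrix {x : Fin n // ¬ x ∈ V'} {x : Fin n // ¬ x ∈ V'} ℝ) with hMb
  refine ⟨Sb.submatrix e.symm e.symm,
    posDef_submatrix_equiv' (posDef_fromBlocks_diag hS'pd Matrix.PosDef.one) e.symm,
    ⟨Mb.submatrix e.symm e.symm, ?_, ?_, ?_⟩, ?_⟩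
  · -- stability
    intro μ hμ
    rw [← Matrix.submatrix_map] at hμ
    have hre : (Mb.map (fun x : ℝ => (x : ℂ))).submatrix ⇑e.symm ⇑e.symm =
        Matrix.reindexAlgEquiv ℂ ℂ e (Mb.map (fun x : ℝ => (x : ℂ))) := by
      rw [Matrix.reindexAlgEquiv_apply, Matrix.reindex_apply]
    rw [hre, AlgEquiv.spectrum_eq] at hμ
    have hmapb : Mb.map (fun x : ℝ => (x : ℂ)) =
        fromBlocks (M'.map (fun x : ℝ => (x : ℂ))) 0 0
          (-1 : Matrix {x : Fin n // ¬ x ∈ V'} {x : Fin n // ¬ x ∈ V'} ℂ) := by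
      rw [hMb, fromBlocks_map]
      ext (a | a) (b | b)
      · rfl
      · simp
      · simp
      · by_cases hab : a = b <;>
          simp [Matrix.map_apply, Matrix.one_apply, hab]
    rw [hmapb] at hμ
    rcases spectrum_fromBlocks_subset _ _ hμ with h | h
    · exact hM'stab μ h
    · have := spectrum_neg_one_subset h
      rw [Set.mem_singleton_iff] at this
      simp [this]
  · -- support
    intro a b hab hMab
    rw [Matrix.submatrix_apply] at hMab
    rcases h1 : e.symm a with va | va <;> rcases h2 : e.symm b with vb | vb <;>
      rw [h1, h2] at hMab
    · -- both in V'
      have ha : a = (va : Fin n) := by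
        have := congrArg e h1
        rwa [Equiv.apply_symm_apply, he, Equiv.sumCompl_apply_inl] at this
      have hb : b = (vb : Fin n) := by
        have := congrArg e h2
        rwa [Equiv.apply_symm_apply, he, Equiv.sumCompl_apply_inl] at this
      have hvab : va ≠ vb := by
        intro hc; exact hab (by rw [ha, hb, hc])
      have hE := hM'supp va vb hvab (by simpa [hMb] using hMab)
      rw [ha, hb]
      exact (hsub _ _ hE).1
    · exact absurd (by simp [hMb] : Mb (Sum.inl va) (Sum.inr vb) = 0) hMab
    · exact absurd (by simp [hMb] : Mb (Sum.inr va) (Sum.inl vb) = 0) hMab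
    · -- both outside V'
      have ha : a = (va : Fin n) := by
        have := congrArg e h1
        rwa [Equiv.apply_symm_apply, he, Equiv.sumCompl_apply_inr] at this
      have hb : b = (vb : Fin n) := by
        have := congrArg e h2
        rwa [Equiv.apply_symm_apply, he, Equiv.sumCompl_apply_inr] at this
      have hvab : va ≠ vb := by
        intro hc; exact hab (by rw [ha, hb, hc])
      exact absurd (by simp [hMb, Matrix.one_apply, hvab] :
        Mb (Sum.inr va) (Sum.inr vb) = 0) hMab
  · -- Lyapunov equation
    have key : Mb * Sb + Sb * Mbᵀ +
        (2:ℝ) • (1 : Matrix ({x : Fin n // x ∈ V'} ⊕ {x : Fin n // ¬ x ∈ V'}) _ ℝ) = 0 := by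
      rw [hMb, hSb, fromBlocks_transpose, fromBlocks_multiply, fromBlocks_multiply,
        ← fromBlocks_one, fromBlocks_smul, fromBlocks_add, fromBlocks_add]
      rw [← fromBlocks_zero]
      ext (a | a) (b | b)
      · have := congrFun (congrFun hM'lyap a) b
        simpa using this
      · simp
      · simp
      · by_cases hab : a = b <;>
          simp [Matrix.add_apply, Matrix.smul_apply, Matrix.one_apply, Matrix.neg_apply,
            hab] <;> norm_num
    rw [Matrix.transpose_submatrix, Matrix.submatrix_mul_equiv Mb Sb (⇑e.symm) e.symm (⇑e.symm),
      Matrix.submatrix_mul_equiv Sb Mbᵀ (⇑e.symm) e.symm (⇑e.symm)]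
    ext a b
    have h5 := congrFun (congrFun key (e.symm a)) (e.symm b)
    simpa [Matrix.submatrix_apply, Matrix.add_apply, Matrix.smul_apply, Matrix.one_apply,
      Matrix.zero_apply, EmbeddingLike.apply_eq_iff_eq] using h5
  · -- minor
    set R' : Finset ↥V' := insert i K' with hR'
    set C' : Finset ↥V' := insert j K' with hC'
    set L : Finset (Fin n) := K \ V' with hL
    have hR'C' : R'.card = C'.card := by
      rw [hR', hC', Finset.card_insert_of_notMem hiK', Finset.card_insert_of_notMem hjK']
    have hRimg : insert (i:Fin n) K = R'.image (fun v : ↥V' => (v:Fin n)) ∪ L := by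
      ext x
      simp only [Finset.mem_insert, Finset.mem_union, Finset.mem_image, Finset.mem_sdiff, hR', hL]
      constructor
      · rintro (rfl | hxK)
        · exact Or.inl ⟨i, Or.inl rfl, rfl⟩
        · by_cases hxV : x ∈ V'
          · exact Or.inl ⟨⟨x, hxV⟩, Or.inr ((hKV' ⟨x, hxV⟩).mpr hxK), rfl⟩
          · exact Or.inr ⟨hxK, hxV⟩
      · rintro (⟨v, rfl | hv, rfl⟩ | ⟨hxK, _⟩)
        · exact Or.inl rfl
        · exact Or.inr ((hKV' v).mp hv)
        · exact Or.inr hxK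
    have hCimg : insert (j:Fin n) K = C'.image (fun v : ↥V' => (v:Fin n)) ∪ L := by
      ext x
      simp only [Finset.mem_insert, Finset.mem_union, Finset.mem_image, Finset.mem_sdiff, hC', hL]
      constructor
      · rintro (rfl | hxK)
        · exact Or.inl ⟨j, Or.inl rfl, rfl⟩
        · by_cases hxV : x ∈ V'
          · exact Or.inl ⟨⟨x, hxV⟩, Or.inr ((hKV' ⟨x, hxV⟩).mpr hxK), rfl⟩
          · exact Or.inr ⟨hxK, hxV⟩
      · rintro (⟨v, rfl | hv, rfl⟩ | ⟨hxK, _⟩)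
        · exact Or.inl rfl
        · exact Or.inr ((hKV' v).mp hv)
        · exact Or.inr hxK
    have hdisjR : Disjoint (R'.image (fun v : ↥V' => (v:Fin n))) L := by
      rw [Finset.disjoint_left]
      rintro x hx hxL
      obtain ⟨v, _, rfl⟩ := Finset.mem_image.mp hx
      exact (Finset.mem_sdiff.mp hxL).2 v.2
    have hdisjC : Disjoint (C'.image (fun v : ↥V' => (v:Fin n))) L := by
      rw [Finset.disjoint_left]
      rintro x hx hxL
      obtain ⟨v, _, rfl⟩ := Finset.mem_image.mp hx
      exact (Finset.mem_sdiff.mp hxL).2 v.2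
    have hinjval : Function.Injective (fun v : ↥V' => (v:Fin n)) := Subtype.val_injective
    have hcardR : (insert (i:Fin n) K).card = R'.card + L.card := by
      rw [hRimg, Finset.card_union_of_disjoint hdisjR, Finset.card_image_of_injective _ hinjval]
    have hcardRC : (insert (i:Fin n) K).card = (insert (j:Fin n) K).card := by
      rw [Finset.card_insert_of_notMem hiK, Finset.card_insert_of_notMem hjK]
    -- the two-block enumerations
    set rs : Fin R'.card → Fin n := fun a => ((R'.orderIsoOfFin rfl a : ↥V') : Fin n) with hrs
    set cs : Fin R'.card → Fin n :=
      fun b => ((C'.orderIsoOfFin hR'C'.symm b : ↥V') : Fin n) with hcs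
    set rL : Fin L.card → Fin n := fun b => ((L.orderIsoOfFin rfl b : L) : Fin n) with hrL
    set r2 : Fin R'.card ⊕ Fin L.card → Fin n := Sum.elim rs rL with hr2
    set c2 : Fin R'.card ⊕ Fin L.card → Fin n := Sum.elim cs rL with hc2
    have hmemVr : ∀ a, rs a ∈ V' := fun a => ((R'.orderIsoOfFin rfl a : ↥R') : ↥V').2
    have hmemVc : ∀ a, cs a ∈ V' := fun a => ((C'.orderIsoOfFin hR'C'.symm a : ↥C') : ↥V').2
    have hnotV : ∀ b, rL b ∉ V' := fun b =>
      (Finset.mem_sdiff.mp (L.orderIsoOfFin rfl b).2).2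
    have hrLinj : Function.Injective rL := fun a b hab =>
      (L.orderIsoOfFin rfl).injective (Subtype.ext hab)
    have hrsinj : Function.Injective rs := fun a b hab =>
      (R'.orderIsoOfFin rfl).injective (Subtype.ext (Subtype.ext hab))
    have hcsinj : Function.Injective cs := fun a b hab =>
      (C'.orderIsoOfFin hR'C'.symm).injective (Subtype.ext (Subtype.ext hab))
    have hr2inj : Function.Injective r2 := by
      rintro (a | a) (b | b) hab
      · exact congrArg Sum.inl (hrsinj hab)
      · exact absurd ((show rs a = rL b from hab) ▸ hmemVr a) (hnotV b)
      · exact absurd ((show rs b = rL a from hab.symm) ▸ hmemVr b) (hnotV a)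
      · exact congrArg Sum.inr (hrLinj hab)
    have hc2inj : Function.Injective c2 := by
      rintro (a | a) (b | b) hab
      · exact congrArg Sum.inl (hcsinj hab)
      · exact absurd ((show cs a = rL b from hab) ▸ hmemVc a) (hnotV b)
      · exact absurd ((show cs b = rL a from hab.symm) ▸ hmemVc b) (hnotV a)
      · exact congrArg Sum.inr (hrLinj hab)
    -- block decomposition of the big submatrix
    set A' : Matrix (Fin R'.card) (Fin R'.card) ℝ :=
      S'.submatrix (fun a => ((R'.orderIsoOfFin rfl a : ↥R') : ↥V'))
        (fun b => ((C'.orderIsoOfFin hR'C'.symm b : ↥C') : ↥V')) with hA'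
    have hesymm_mem : ∀ (x : Fin n) (hx : x ∈ V'), e.symm x = Sum.inl ⟨x, hx⟩ :=
      fun x hx => Equiv.sumCompl_symm_apply_of_pos hx
    have hesymm_not : ∀ (x : Fin n) (hx : x ∉ V'), e.symm x = Sum.inr ⟨x, hx⟩ :=
      fun x hx => Equiv.sumCompl_symm_apply_of_neg hx
    have hblock : (Sb.submatrix (⇑e.symm) (⇑e.symm)).submatrix r2 c2 =
        fromBlocks A' 0 0 (1 : Matrix (Fin L.card) (Fin L.card) ℝ) := by
      ext (x | x) (y | y)
      · rw [Matrix.submatrix_apply, Matrix.submatrix_apply, hr2, hc2, Sum.elim_inl, Sum.elim_inl,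
          hesymm_mem _ (hmemVr x), hesymm_mem _ (hmemVc y)]
        rfl
      · rw [Matrix.submatrix_apply, Matrix.submatrix_apply, hr2, hc2, Sum.elim_inl, Sum.elim_inr,
          hesymm_mem _ (hmemVr x), hesymm_not _ (hnotV y)]
        simp [hSb]
      · rw [Matrix.submatrix_apply, Matrix.submatrix_apply, hr2, hc2, Sum.elim_inr, Sum.elim_inl,
          hesymm_not _ (hnotV x), hesymm_mem _ (hmemVc y)]
        simp [hSb]
      · rw [Matrix.submatrix_apply, Matrix.submatrix_apply, hr2, hc2, Sum.elim_inr, Sum.elim_inr,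
          hesymm_not _ (hnotV x), hesymm_not _ (hnotV y)]
        by_cases hxy : x = y
        · subst hxy
          simp [hSb, Matrix.one_apply]
        · have : rL x ≠ rL y := fun hc => hxy (hrLinj hc)
          simp [hSb, Matrix.one_apply, Subtype.ext_iff, this, hxy]
    -- the glue equivalence
    set e2 : Fin (insert (i:Fin n) K).card ≃ Fin R'.card ⊕ Fin L.card :=
      (finCongr hcardR).trans finSumFinEquiv.symm with he2
    -- ranges
    have hrangeR : Set.range (fun a : Fin (insert (i:Fin n) K).card =>
        (((insert (i:Fin n) K).orderIsoOfFin rfl a : _) : Fin n)) = ↑(insert (i:Fin n) K) :=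
      range_coe_orderIsoOfFin _ rfl
    have hrangeC : Set.range (fun a : Fin (insert (i:Fin n) K).card =>
        (((insert (j:Fin n) K).orderIsoOfFin hcardRC.symm a : _) : Fin n)) =
        ↑(insert (j:Fin n) K) := range_coe_orderIsoOfFin _ hcardRC.symm
    have hrangers : Set.range rs = (fun v : ↥V' => (v:Fin n)) '' ↑R' := by
      rw [hrs]
      rw [show (fun a : Fin R'.card => ((R'.orderIsoOfFin rfl a : ↥V') : Fin n)) =
        (fun v : ↥V' => (v:Fin n)) ∘ (fun a => ((R'.orderIsoOfFin rfl a : ↥R') : ↥V')) from rfl,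
        Set.range_comp, range_coe_orderIsoOfFin _ rfl]
    have hrangecs : Set.range cs = (fun v : ↥V' => (v:Fin n)) '' ↑C' := by
      rw [hcs]
      rw [show (fun a : Fin R'.card => ((C'.orderIsoOfFin hR'C'.symm a : ↥V') : Fin n)) =
        (fun v : ↥V' => (v:Fin n)) ∘ (fun a => ((C'.orderIsoOfFin hR'C'.symm a : ↥C') : ↥V'))
        from rfl, Set.range_comp, range_coe_orderIsoOfFin _ hR'C'.symm]
    have hrangerL : Set.range rL = ↑L := range_coe_orderIsoOfFin _ rfl
    have hrange_r2e2 : Set.range (r2 ∘ e2) = ↑(insert (i:Fin n) K) := by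
      rw [Set.range_comp, Equiv.range_eq_univ, Set.image_univ, hr2, Set.Sum.elim_range,
        hrangers, hrangerL, ← Finset.coe_image, ← Finset.coe_union, ← hRimg]
    have hrange_c2e2 : Set.range (c2 ∘ e2) = ↑(insert (j:Fin n) K) := by
      rw [Set.range_comp, Equiv.range_eq_univ, Set.image_univ, hc2, Set.Sum.elim_range,
        hrangecs, hrangerL, ← Finset.coe_image, ← Finset.coe_union, ← hCimg]
    obtain ⟨π, hπ⟩ := exists_comp_perm
      (inj_coe_orderIsoOfFin (insert (i:Fin n) K) rfl)
      (hr2inj.comp e2.injective) (hrangeR.trans hrange_r2e2.symm)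
    obtain ⟨τ, hτ⟩ := exists_comp_perm
      (inj_coe_orderIsoOfFin (insert (j:Fin n) K) hcardRC.symm)
      (hc2inj.comp e2.injective) (hrangeC.trans hrange_c2e2.symm)
    show ((Sb.submatrix (⇑e.symm) (⇑e.symm)).submatrix
      (fun a : Fin (insert (i:Fin n) K).card =>
        (((insert (i:Fin n) K).orderIsoOfFin rfl a : _) : Fin n))
      (fun b : Fin (insert (i:Fin n) K).card =>
        (((insert (j:Fin n) K).orderIsoOfFin hcardRC.symm b : _) : Fin n))).det ≠ 0
    rw [hπ, hτ]
    have hstep : (Sb.submatrix (⇑e.symm) (⇑e.symm)).submatrix ((r2 ∘ e2) ∘ π) ((c2 ∘ e2) ∘ τ) =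
        (((Sb.submatrix (⇑e.symm) (⇑e.symm)).submatrix (r2 ∘ e2) (c2 ∘ e2)).submatrix
          id ⇑τ).submatrix ⇑π id := by
      simp [Matrix.submatrix_submatrix, Function.comp_assoc]
    rw [hstep, Matrix.det_permute, Matrix.det_permute']
    have hmid : ((Sb.submatrix (⇑e.symm) (⇑e.symm)).submatrix (r2 ∘ e2) (c2 ∘ e2)).det =
        A'.det := by
      rw [← Matrix.submatrix_submatrix, Matrix.det_submatrix_equiv_self, hblock,
        Matrix.det_fromBlocks_zero₂₁, Matrix.det_one, mul_one]
    rw [hmid]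
    have hA'ne : A'.det ≠ 0 := hminor
    intro hc
    rcases Int.units_eq_one_or (Equiv.Perm.sign π) with hs | hs <;>
      rcases Int.units_eq_one_or (Equiv.Perm.sign τ) with ht | ht <;>
      rw [hs, ht] at hc <;> simp at hc <;> exact hA'ne hc
end

section
/- Let T be a directed path 1 → 2 → ... → n (n ≥ 2), and let Σ(ζ) be the matrix whose (a,b) entry for a ≤ b is a polynomial whose highest-degree term equals binom(a+b-2, a-1) ζ^{a+b-2} (coming from the unique longest trek from a to b through the source node 1). Then the determinant of the submatrix Σ(ζ)_{{1,...,n-1},{2,...,n}}, as a polynomial in ζ, has non-zero leading term; in particular this determinant is a non-zero polynomial, so for all but finitely many ζ the minor is non-zero. -/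
open Matrix Polynomial Finset

/-- The covariance matrix `Σ(ζ)` of the directed path `0 → 1 → ⋯ → n-1`
(a trek with top node `0`): the `(i,j)` entry is `Σ_T binom(ℓ+r, ℓ) ζ^{ℓ+r}`
summed over all treks from `i` to `j`; treks correspond to common ancestors
`s ≤ min i j` with branch lengths `ℓ = i - s`, `r = j - s`, and the highest
degree term of the `(a,b)` entry (for `a ≤ b`) is `binom(a+b, a) ζ^{a+b}`
(0-indexed), coming from the unique longest trek through the source `0`. -/
lemma pm_vand (i j : ℕ) :
    ∑ k ∈ Finset.range (j+1), (i+1).choose (k+1) * j.choose k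
      = (i+j+1).choose (j+1) := by
  have h := Nat.add_choose_eq (i+1) j (j+1)
  rw [Finset.Nat.sum_antidiagonal_eq_sum_range_succ_mk, Finset.sum_range_succ'] at h
  simp only [Nat.sub_zero, Nat.choose_zero_right, one_mul] at h
  rw [Nat.choose_eq_zero_of_lt (Nat.lt_succ_self j), add_zero] at h
  have h2 : ∀ k ∈ Finset.range (j+1),
      (i+1).choose (k+1) * j.choose (j + 1 - (k+1)) = (i+1).choose (k+1) * j.choose k := by
    intro k hk
    have hk' : k ≤ j := Nat.lt_succ_iff.mp (Finset.mem_range.mp hk)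
    rw [show j + 1 - (k+1) = j - k by omega, Nat.choose_symm hk']
  rw [Finset.sum_congr rfl h2] at h
  rw [show i + j + 1 = i + 1 + j by ring]
  exact h.symm

lemma pm_coeff_prod {ι : Type*} (s : Finset ι) (f : ι → Polynomial ℝ) (d : ι → ℕ)
    (h : ∀ i ∈ s, (f i).natDegree ≤ d i) :
    (∏ i ∈ s, f i).coeff (∑ i ∈ s, d i) = ∏ i ∈ s, (f i).coeff (d i) := by
  induction s using Finset.cons_induction with
  | empty => simp
  | cons a s ha ih =>
    rw [Finset.prod_cons, Finset.sum_cons, Finset.prod_cons,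
      coeff_mul_add_eq_of_natDegree_le (h a (Finset.mem_cons_self a s))
        (le_trans (Polynomial.natDegree_prod_le _ _) (Finset.sum_le_sum fun i hi =>
          h i (Finset.mem_cons_of_mem hi))),
      ih fun i hi => h i (Finset.mem_cons_of_mem hi)]

lemma pm_detL (m : ℕ) :
    (Matrix.of fun a b : Fin m => ((((a:ℕ)+(b:ℕ)+1).choose (a:ℕ) : ℕ) : ℝ)).det = 1 := by
  set A : Matrix (Fin m) (Fin m) ℝ :=
    Matrix.of fun a k => ((((a:ℕ)+1).choose ((k:ℕ)+1) : ℕ) : ℝ) with hA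
  set Cm : Matrix (Fin m) (Fin m) ℝ :=
    Matrix.of fun k b => (((b:ℕ).choose (k:ℕ) : ℕ) : ℝ) with hC
  have hfac : (Matrix.of fun a b : Fin m => ((((a:ℕ)+(b:ℕ)+1).choose (a:ℕ) : ℕ) : ℝ)) = A * Cm := by
    ext a b
    rw [Matrix.mul_apply]
    simp only [hA, hC, Matrix.of_apply]
    have key : ∑ k : Fin m, ((((a:ℕ)+1).choose ((k:ℕ)+1) : ℕ) : ℝ) * (((b:ℕ).choose (k:ℕ) : ℕ) : ℝ)
        = ((∑ k ∈ Finset.range m, ((a:ℕ)+1).choose (k+1) * (b:ℕ).choose k : ℕ) : ℝ) := by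
      push_cast
      rw [← Fin.sum_univ_eq_sum_range]
    rw [key]
    have h1 : Finset.range ((b:ℕ)+1) ⊆ Finset.range m := Finset.range_subset_range.mpr b.isLt
    have hsub : ∑ k ∈ Finset.range m, ((a:ℕ)+1).choose (k+1) * (b:ℕ).choose k
        = ∑ k ∈ Finset.range ((b:ℕ)+1), ((a:ℕ)+1).choose (k+1) * (b:ℕ).choose k := by
      refine (Finset.sum_subset h1 fun k _ hk' => ?_).symm
      have : (b:ℕ) < k := by simp only [Finset.mem_range] at hk'; omega
      rw [Nat.choose_eq_zero_of_lt this, mul_zero]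
    rw [hsub, pm_vand]
    have hsym := Nat.choose_symm (show (b:ℕ)+1 ≤ (a:ℕ)+(b:ℕ)+1 by omega)
    rw [show (a:ℕ)+(b:ℕ)+1 - ((b:ℕ)+1) = (a:ℕ) by omega] at hsym
    norm_cast
  rw [hfac, Matrix.det_mul]
  have hdA : A.det = 1 := by
    rw [Matrix.det_of_lowerTriangular]
    · simp [hA]
    · intro i j hij
      have hlt : (i:ℕ) < (j:ℕ) := hij
      simp only [hA, Matrix.of_apply, Nat.cast_eq_zero]
      exact Nat.choose_eq_zero_of_lt (by omega)
  have hdC : Cm.det = 1 := by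
    rw [Matrix.det_of_upperTriangular]
    · simp [hC]
    · intro i j hij
      have hlt : (j:ℕ) < (i:ℕ) := hij
      simp only [hC, Matrix.of_apply, Nat.cast_eq_zero]
      exact Nat.choose_eq_zero_of_lt (by omega)
  rw [hdA, hdC, mul_one]
noncomputable def pathSigma (n : ℕ) : Matrix (Fin n) (Fin n) (Polynomial ℝ) :=
  Matrix.of fun i j =>
    ∑ s : Fin n,
      if (s : ℕ) ≤ (i : ℕ) ∧ (s : ℕ) ≤ (j : ℕ) then
        Polynomial.C ((((i : ℕ) - (s : ℕ)) + ((j : ℕ) - (s : ℕ))).choose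
            ((i : ℕ) - (s : ℕ)) : ℝ) *
          Polynomial.X ^ (((i : ℕ) - (s : ℕ)) + ((j : ℕ) - (s : ℕ)))
      else 0

lemma pm_natDegree_entry_le (n : ℕ) (i j : Fin n) :
    (pathSigma n i j).natDegree ≤ (i:ℕ) + (j:ℕ) := by
  simp only [pathSigma, Matrix.of_apply]
  refine Polynomial.natDegree_sum_le_of_forall_le _ _ fun s _ => ?_
  split
  · exact (Polynomial.natDegree_C_mul_X_pow_le _ _).trans (by omega)
  · simp

lemma pm_coeff_entry (n : ℕ) (hn : 0 < n) (i j : Fin n) :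
    (pathSigma n i j).coeff ((i:ℕ) + (j:ℕ))
      = ((((i:ℕ) + (j:ℕ)).choose (i:ℕ) : ℕ) : ℝ) := by
  simp only [pathSigma, Matrix.of_apply]
  rw [Polynomial.finset_sum_coeff]
  rw [Finset.sum_eq_single (⟨0, hn⟩ : Fin n)]
  · simp [coeff_C_mul, coeff_X_pow]
  · intro s _ hs
    have hs' : 1 ≤ (s:ℕ) := by
      rcases Nat.eq_zero_or_pos (s:ℕ) with h | h
      · exact absurd (Fin.ext h) hs
      · exact h
    split
    next hc =>
      obtain ⟨h1, h2⟩ := hc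
      rw [coeff_C_mul, coeff_X_pow, if_neg (by omega), mul_zero]
    · simp
  · intro h; exact absurd (Finset.mem_univ _) h



set_option maxHeartbeats 1000000 in
/-- For the directed path `0 → 1 → ⋯ → n-1`, the minor of `Σ(ζ)` with rows
`{0,…,n-2}` and columns `{1,…,n-1}` has non-zero leading term: its leading
coefficient is `1` (the determinant of the Pascal matrix) and its degree is
`(n-1)²`; in particular it is a non-zero polynomial and vanishes for only
finitely many values of `ζ`. -/
theorem path_minor_leading_term (n : ℕ) (hn : 2 ≤ n) :
    (((pathSigma n).submatrix
        (fun a : Fin (n - 1) => (⟨(a : ℕ), by have := a.isLt; omega⟩ : Fin n))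
        (fun b : Fin (n - 1) => (⟨(b : ℕ) + 1, by have := b.isLt; omega⟩ : Fin n))).det).natDegree
        = (n - 1) ^ 2 ∧
      (((pathSigma n).submatrix
        (fun a : Fin (n - 1) => (⟨(a : ℕ), by have := a.isLt; omega⟩ : Fin n))
        (fun b : Fin (n - 1) => (⟨(b : ℕ) + 1, by have := b.isLt; omega⟩ : Fin n))).det).leadingCoeff
        = 1 ∧
      ((pathSigma n).submatrix
        (fun a : Fin (n - 1) => (⟨(a : ℕ), by have := a.isLt; omega⟩ : Fin n))
        (fun b : Fin (n - 1) => (⟨(b : ℕ) + 1, by have := b.isLt; omega⟩ : Fin n))).det ≠ 0 ∧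
      {ζ : ℝ | (((pathSigma n).submatrix
        (fun a : Fin (n - 1) => (⟨(a : ℕ), by have := a.isLt; omega⟩ : Fin n))
        (fun b : Fin (n - 1) => (⟨(b : ℕ) + 1, by have := b.isLt; omega⟩ : Fin n))).det).eval ζ
          = 0}.Finite := by
  set M : Matrix (Fin (n-1)) (Fin (n-1)) (Polynomial ℝ) :=
    (pathSigma n).submatrix
        (fun a : Fin (n - 1) => (⟨(a : ℕ), by have := a.isLt; omega⟩ : Fin n))
        (fun b : Fin (n - 1) => (⟨(b : ℕ) + 1, by have := b.isLt; omega⟩ : Fin n)) with hM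
  have hdeg : ∀ a b : Fin (n-1), (M a b).natDegree ≤ (a:ℕ) + (b:ℕ) + 1 := by
    intro a b
    have := pm_natDegree_entry_le n
      (⟨(a : ℕ), by have := a.isLt; omega⟩ : Fin n)
      (⟨(b : ℕ) + 1, by have := b.isLt; omega⟩ : Fin n)
    simpa [hM, Matrix.submatrix_apply, Nat.add_assoc] using this
  have hcoeff : ∀ a b : Fin (n-1), (M a b).coeff ((a:ℕ) + (b:ℕ) + 1)
      = ((((a:ℕ) + (b:ℕ) + 1).choose (a:ℕ) : ℕ) : ℝ) := by
    intro a b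
    have := pm_coeff_entry n (by omega)
      (⟨(a : ℕ), by have := a.isLt; omega⟩ : Fin n)
      (⟨(b : ℕ) + 1, by have := b.isLt; omega⟩ : Fin n)
    simpa [hM, Matrix.submatrix_apply, Nat.add_assoc] using this
  have hsum : ∀ σ : Equiv.Perm (Fin (n-1)),
      (∑ i : Fin (n-1), ((σ i : ℕ) + (i:ℕ) + 1)) = (n-1)^2 := by
    intro σ
    obtain ⟨k, hk⟩ : ∃ k, n - 1 = k + 1 := ⟨n - 2, by omega⟩
    have h2 : (∑ i : Fin (n-1), (i:ℕ)) * 2 = (n-1) * (n-1-1) := by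
      rw [Fin.sum_univ_eq_sum_range (fun i => i) (n-1)]
      exact Finset.sum_range_id_mul_two (n-1)
    have hc : (∑ i : Fin (n-1), (σ i : ℕ)) = ∑ i : Fin (n-1), (i:ℕ) :=
      Equiv.sum_comp σ (fun i : Fin (n-1) => (i:ℕ))
    rw [Finset.sum_add_distrib, Finset.sum_add_distrib, hc]
    simp only [Finset.sum_const, Finset.card_univ, Fintype.card_fin, smul_eq_mul, mul_one]
    have h3 : (n-1) * (n-1-1) + (n-1) = (n-1)^2 := by rw [hk]; simp; ring
    linarith
  have hDcoeff : M.det.coeff ((n-1)^2) = 1 := by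
    rw [Matrix.det_apply, Polynomial.finset_sum_coeff]
    have step : ∀ σ : Equiv.Perm (Fin (n-1)),
        ((Equiv.Perm.sign σ) • ∏ i, M (σ i) i).coeff ((n-1)^2)
          = (Equiv.Perm.sign σ) •
            ∏ i : Fin (n-1), ((Matrix.of fun a b : Fin (n-1) =>
              ((((a:ℕ)+(b:ℕ)+1).choose (a:ℕ) : ℕ) : ℝ)) (σ i) i) := by
      intro σ
      rw [Polynomial.coeff_smul]
      congr 1
      rw [← hsum σ, pm_coeff_prod _ _ _ (fun i _ => hdeg (σ i) i)]
      refine Finset.prod_congr rfl fun i _ => ?_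
      rw [hcoeff (σ i) i]
      rfl
    rw [Finset.sum_congr rfl fun σ _ => step σ, ← Matrix.det_apply, pm_detL]
  have hDle : M.det.natDegree ≤ (n-1)^2 := by
    rw [Matrix.det_apply]
    refine Polynomial.natDegree_sum_le_of_forall_le _ _ fun σ _ => ?_
    have hsm : ((Equiv.Perm.sign σ) • ∏ i : Fin (n-1), M (σ i) i).natDegree
        ≤ (∏ i : Fin (n-1), M (σ i) i).natDegree := by
      rw [Units.smul_def, zsmul_eq_mul]
      exact Polynomial.natDegree_mul_le.trans (by simp)
    refine hsm.trans ?_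
    refine (Polynomial.natDegree_prod_le Finset.univ (fun i : Fin (n-1) => M (σ i) i)).trans ?_
    calc ∑ i : Fin (n-1), (M (σ i) i).natDegree
        ≤ ∑ i : Fin (n-1), ((σ i : ℕ) + (i:ℕ) + 1) :=
          Finset.sum_le_sum fun i _ => hdeg (σ i) i
      _ = (n-1)^2 := hsum σ
  have hne : M.det ≠ 0 := by
    intro h
    rw [h, Polynomial.coeff_zero] at hDcoeff
    exact one_ne_zero hDcoeff.symm
  have hge : (n-1)^2 ≤ M.det.natDegree :=
    Polynomial.le_natDegree_of_ne_zero (by rw [hDcoeff]; exact one_ne_zero)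
  have hdegeq : M.det.natDegree = (n-1)^2 := le_antisymm hDle hge
  refine ⟨hdegeq, ?_, hne, ?_⟩
  · rw [Polynomial.leadingCoeff, hdegeq, hDcoeff]
  · exact Polynomial.finite_setOf_isRoot hne
end
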